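/- Let G be a graph whose Laplacian L satisfies L*(Eᵢ) = γᵢ𝟙 with γᵢ > 0 for all nonzero eigenprojectors Eᵢ. Then for each j ∈ [r−1], the pair X_j = Σ_{i=r−j+1}^r Eᵢ together with x_j = Σ_{i=r−j+1}^r γᵢ is feasible for the dual SDP (L*(X) ≥ x𝟙, 0 ⪯ X ⪯ I, tr X = k_j), and Y_j = Σ_{i=r−j+1}^r (λᵢ − λ_{r−j})Eᵢ with y_j = λ_{r−j} and w = 𝟙 is feasible for the primal, and these satisfy complementary slackness: X_j(Y_j + y_jI − L) = 0, X_jY_j = Y_j, and ⟨L*(X_j) − x_j𝟙, 𝟙⟩ = 0. Consequently 𝟙 minimizes S_{k_j}(w) over Δ_E. -/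

import Mathlib

open Matrix Finset

/-- The eigenvalues of a matrix (junk value if not Hermitian). -/
noncomputable def eigs {n : ℕ} (M : Matrix (Fin n) (Fin n) ℝ) : Fin n → ℝ :=
  if h : M.IsHermitian then h.eigenvalues else 0

/-- The sum of the `k` smallest eigenvalues of `M`. -/
noncomputable def sumSmallest {n : ℕ} (M : Matrix (Fin n) (Fin n) ℝ) (k : ℕ) : ℝ :=
  sInf {t : ℝ | ∃ s : Finset (Fin n), s.card = k ∧ t = ∑ i ∈ s, eigs M i}

/-- The sum of the `k` largest eigenvalues of `M`. -/
noncomputable def sumLargest {n : ℕ} (M : Matrix (Fin n) (Fin n) ℝ) (k : ℕ) : ℝ :=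
  sSup {t : ℝ | ∃ s : Finset (Fin n), s.card = k ∧ t = ∑ i ∈ s, eigs M i}

/-- The weighted Laplacian `𝓛(w) = Σ_{ab∈E} w_{ab}(e_a−e_b)(e_a−e_b)ᵀ`, written entrywise
for a symmetric weight function supported on the edges. -/
def wLap {n : ℕ} (w : Fin n → Fin n → ℝ) : Matrix (Fin n) (Fin n) ℝ :=
  Matrix.of fun i j => if i = j then ∑ k, w i k else -(w i j)

/-- `w` is a valid nonnegative symmetric weight function supported on the edges of `G`. -/
def ValidWeight {n : ℕ} (G : SimpleGraph (Fin n)) (w : Fin n → Fin n → ℝ) : Prop :=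
  (∀ i j, w i j = w j i) ∧ (∀ i j, ¬ G.Adj i j → w i j = 0) ∧ (∀ i j, 0 ≤ w i j)

/-- `w` lies in the simplex `Δ_E = {w ≥ 0 : 𝟙ᵀw = |E|}` (edge sums counted twice as
ordered pairs). -/
def InSimplex {n : ℕ} (G : SimpleGraph (Fin n)) [DecidableRel G.Adj]
    (w : Fin n → Fin n → ℝ) : Prop :=
  ValidWeight G w ∧ ∑ i, ∑ j, w i j = 2 * G.edgeFinset.card

section Helpers

variable {n : ℕ}

lemma psd_of_symm_idem {A : Matrix (Fin n) (Fin n) ℝ} (hs : A.IsSymm) (hi : A * A = A) :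
    A.PosSemidef := by
  have h : Aᴴ * A = A := by
    rw [conjTranspose_eq_transpose_of_trivial, hs, hi]
  exact h ▸ posSemidef_conjTranspose_mul_self A

lemma psd_diag_nonneg {A : Matrix (Fin n) (Fin n) ℝ} (hA : A.PosSemidef) (i : Fin n) :
    0 ≤ A i i := by
  exact hA.diag_nonneg

lemma psd_trace_nonneg {A : Matrix (Fin n) (Fin n) ℝ} (hA : A.PosSemidef) : 0 ≤ A.trace :=
  Finset.sum_nonneg fun i _ => psd_diag_nonneg hA i

lemma psd_smul {A : Matrix (Fin n) (Fin n) ℝ} (hA : A.PosSemidef) {c : ℝ} (hc : 0 ≤ c) :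
    (c • A).PosSemidef := by
  refine ⟨?_, fun x => ?_⟩
  · have hAt : Aᵀ = A := by
      have := hA.1.eq; rwa [conjTranspose_eq_transpose_of_trivial] at this
    unfold Matrix.IsHermitian
    rw [conjTranspose_eq_transpose_of_trivial, transpose_smul, hAt]
  · exact (hA.smul hc).2 x

lemma trace_mul_psd_nonneg {A B : Matrix (Fin n) (Fin n) ℝ} (hA : A.PosSemidef)
    (hB : B.PosSemidef) : 0 ≤ (A * B).trace := by
  classical
  have hs := hA.1.spectral_theorem
  rw [Unitary.conjStarAlgAut_apply] at hs
  set U : Matrix (Fin n) (Fin n) ℝ := (hA.1.eigenvectorUnitary : Matrix (Fin n) (Fin n) ℝ)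
  have hps : (Uᴴ * B * U).PosSemidef := hB.conjTranspose_mul_mul_same _
  set D : Matrix (Fin n) (Fin n) ℝ := diagonal ((RCLike.ofReal : ℝ → ℝ) ∘ hA.1.eigenvalues) with hD
  have e : (A * B).trace = (D * (Uᴴ * B * U)).trace := by
    rw [hs, ← Matrix.star_eq_conjTranspose, show U * D * star U * B = U * (D * (star U * B)) by
      simp only [Matrix.mul_assoc], Matrix.trace_mul_comm]
    simp only [Matrix.mul_assoc]
  rw [e]
  simp only [Matrix.trace, Matrix.diag, hD, Matrix.diagonal_mul]
  exact Finset.sum_nonneg fun i _ => mul_nonneg (by simpa using hA.eigenvalues_nonneg i)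
    (hps.diag_nonneg)

end Helpers

section H2

variable {n : ℕ}


lemma sum_dot_le {ι : Type*} [Fintype ι] (lamf t mm : ι → ℝ) (S : Finset ι) (c : ℝ)
    (ht0 : ∀ i, 0 ≤ t i) (htm : ∀ i ∈ S, t i ≤ mm i)
    (hcle : ∀ i ∉ S, lamf i ≤ c) (hcge : ∀ i ∈ S, c ≤ lamf i)
    (hsum : ∑ i, t i = ∑ i ∈ S, mm i) :
    ∑ i, lamf i * t i ≤ ∑ i ∈ S, lamf i * mm i := by
  classical
  have key : ∑ i, (lamf i - c) * t i ≤ ∑ i ∈ S, (lamf i - c) * mm i := by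
    have h1 : ∑ i, (lamf i - c) * t i ≤ ∑ i ∈ S, (lamf i - c) * t i := by
      rw [← Finset.sum_filter_add_sum_filter_not Finset.univ (· ∈ S)]
      have e : Finset.univ.filter (· ∈ S) = S := by ext i; simp
      rw [e]
      have : ∑ i ∈ Finset.univ.filter (· ∉ S), (lamf i - c) * t i ≤ 0 := by
        apply Finset.sum_nonpos
        intro i hi
        simp only [Finset.mem_filter] at hi
        exact mul_nonpos_of_nonpos_of_nonneg (sub_nonpos.2 (hcle i hi.2)) (ht0 i)
      linarith
    refine h1.trans (Finset.sum_le_sum fun i hi => ?_)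
    exact mul_le_mul_of_nonneg_left (htm i hi) (sub_nonneg.2 (hcge i hi))
  have e1 : ∑ i, lamf i * t i = ∑ i, (lamf i - c) * t i + c * ∑ i, t i := by
    rw [Finset.mul_sum, ← Finset.sum_add_distrib]
    exact Finset.sum_congr rfl fun i _ => by ring
  have e2 : ∑ i ∈ S, lamf i * mm i = ∑ i ∈ S, (lamf i - c) * mm i + c * ∑ i ∈ S, mm i := by
    rw [Finset.mul_sum, ← Finset.sum_add_distrib]
    exact Finset.sum_congr rfl fun i _ => by ring
  rw [e1, e2, hsum]
  linarith

lemma exists_topk (d t : Fin n → ℝ) (k : ℕ) (hk : k ≤ n)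
    (ht0 : ∀ i, 0 ≤ t i) (ht1 : ∀ i, t i ≤ 1) (hsum : ∑ i, t i = k) :
    ∃ s : Finset (Fin n), s.card = k ∧ ∑ i, d i * t i ≤ ∑ i ∈ s, d i := by
  rcases Nat.eq_zero_or_pos k with hk0 | hkpos
  · subst hk0
    have ht : ∀ i, t i = 0 := by
      intro i
      have h0 : ∑ i, t i = 0 := by rw [hsum]; norm_num
      have := (Finset.sum_eq_zero_iff_of_nonneg (fun i _ => ht0 i)).1 h0
      exact this i (Finset.mem_univ i)
    refine ⟨∅, rfl, ?_⟩
    simp [ht]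
  · have hne : ((Finset.univ : Finset (Fin n)).powersetCard k).Nonempty := by
      obtain ⟨s, -, hs⟩ := Finset.exists_subset_card_eq (by simpa using hk :
        k ≤ (Finset.univ : Finset (Fin n)).card)
      exact ⟨s, by simp [Finset.mem_powersetCard, hs]⟩
    obtain ⟨s, hsmem, hsmax⟩ := Finset.exists_max_image _ (fun s => ∑ i ∈ s, d i) hne
    have hscard : s.card = k := (Finset.mem_powersetCard.1 hsmem).2
    have hsne : s.Nonempty := Finset.card_pos.1 (by omega)
    obtain ⟨i0, hi0, hmin⟩ := Finset.exists_min_image s d hsne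
    set c := d i0 with hc
    have hout : ∀ i ∉ s, d i ≤ c := by
      intro i his
      by_contra hlt
      push_neg at hlt
      have hmem' : insert i (s.erase i0) ∈ (Finset.univ : Finset (Fin n)).powersetCard k := by
        rw [Finset.mem_powersetCard]
        refine ⟨Finset.subset_univ _, ?_⟩
        rw [Finset.card_insert_of_notMem (fun h => his (Finset.mem_of_mem_erase h)),
          Finset.card_erase_of_mem hi0, hscard]
        omega
      have := hsmax _ hmem'
      rw [Finset.sum_insert (fun h => his (Finset.mem_of_mem_erase h)),
        Finset.sum_erase_eq_sub hi0] at this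
      linarith
    refine ⟨s, hscard, ?_⟩
    have := sum_dot_le d t (fun _ => 1) s c ht0 (fun i _ => ht1 i) hout (fun i hi => hmin i hi)
      (by rw [hsum]; simp [hscard])
    simpa using this
end H2

section H3
variable {n : ℕ}

lemma eigs_eq {M : Matrix (Fin n) (Fin n) ℝ} (hM : M.IsHermitian) :
    eigs M = hM.eigenvalues := by
  unfold eigs; rw [dif_pos hM]

lemma sumLargest_bddAbove (M : Matrix (Fin n) (Fin n) ℝ) (k : ℕ) :
    BddAbove {t : ℝ | ∃ s : Finset (Fin n), s.card = k ∧ t = ∑ i ∈ s, eigs M i} := by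
  apply Set.Finite.bddAbove
  apply Set.Finite.subset (Set.finite_range (fun s : Finset (Fin n) => ∑ i ∈ s, eigs M i))
  rintro t ⟨s, -, rfl⟩
  exact ⟨s, rfl⟩

lemma le_sumLargest (M : Matrix (Fin n) (Fin n) ℝ) {k : ℕ} (s : Finset (Fin n))
    (hs : s.card = k) : ∑ i ∈ s, eigs M i ≤ sumLargest M k :=
  le_csSup (sumLargest_bddAbove M k) ⟨s, hs, rfl⟩

lemma sumLargest_le (M : Matrix (Fin n) (Fin n) ℝ) {k : ℕ} (hk : k ≤ n) {c : ℝ}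
    (h : ∀ s : Finset (Fin n), s.card = k → ∑ i ∈ s, eigs M i ≤ c) :
    sumLargest M k ≤ c := by
  obtain ⟨s, -, hs⟩ := Finset.exists_subset_card_eq (by simpa using hk :
    k ≤ (Finset.univ : Finset (Fin n)).card)
  refine csSup_le ⟨_, s, hs, rfl⟩ ?_
  rintro t ⟨s', h', rfl⟩
  exact h s' h'

lemma trace_mul_diagonal' (A : Matrix (Fin n) (Fin n) ℝ) (d : Fin n → ℝ) :
    (A * diagonal d).trace = ∑ i, A i i * d i := by
  simp only [Matrix.trace, Matrix.diag, Matrix.mul_apply, Matrix.diagonal_apply]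
  refine Finset.sum_congr rfl fun i _ => ?_
  rw [Finset.sum_eq_single i (fun b _ hb => by simp [hb]) (by simp)]
  simp

lemma unitary_facts {M : Matrix (Fin n) (Fin n) ℝ} (hM : M.IsHermitian) :
    ∃ U : Matrix (Fin n) (Fin n) ℝ, (∀ X, U * (star U * X) = X) ∧
      (∀ X, star U * (U * X) = X) ∧ star U * U = 1 ∧ U * star U = 1 ∧
      M = U * diagonal hM.eigenvalues * star U := by
  have hUU : (hM.eigenvectorUnitary : Matrix (Fin n) (Fin n) ℝ) * star _ = 1 :=
    mem_unitaryGroup_iff.mp (hM.eigenvectorUnitary).2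
  have hU'U : star (hM.eigenvectorUnitary : Matrix (Fin n) (Fin n) ℝ) * _ = 1 :=
    mem_unitaryGroup_iff'.mp (hM.eigenvectorUnitary).2
  refine ⟨(hM.eigenvectorUnitary : Matrix (Fin n) (Fin n) ℝ),
    fun X => by rw [← Matrix.mul_assoc, hUU, Matrix.one_mul],
    fun X => by rw [← Matrix.mul_assoc, hU'U, Matrix.one_mul],
    hU'U, hUU, ?_⟩
  have := hM.spectral_theorem
  rw [Unitary.conjStarAlgAut_apply] at this
  exact this

lemma fan_bound {M X : Matrix (Fin n) (Fin n) ℝ} (hM : M.IsHermitian)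
    (hX : X.PosSemidef) (hX1 : (1 - X).PosSemidef) {k : ℕ} (hk : k ≤ n)
    (htr : X.trace = (k : ℝ)) :
    (X * M).trace ≤ sumLargest M k := by
  obtain ⟨U, hc1, hc2, hU'U, hUU, hspec⟩ := unitary_facts hM
  set d := hM.eigenvalues with hd
  set Y := star U * X * U with hY
  have hYpsd : Y.PosSemidef := by
    have := hX.conjTranspose_mul_mul_same U
    simpa only [← Matrix.star_eq_conjTranspose] using this
  have hY1psd : (1 - Y).PosSemidef := by
    have h := hX1.conjTranspose_mul_mul_same U
    rw [← Matrix.star_eq_conjTranspose] at h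
    have e : star U * (1 - X) * U = 1 - Y := by
      rw [Matrix.mul_sub, Matrix.mul_one, Matrix.sub_mul, hU'U, hY]
    rwa [e] at h
  have htrY : Y.trace = (k : ℝ) := by
    rw [hY, trace_mul_cycle, hUU, Matrix.one_mul]
    exact htr
  have htrXM : (X * M).trace = ∑ i, d i * (Y i i) := by
    have e : X * M = X * U * diagonal d * star U := by
      rw [hspec, ← Matrix.mul_assoc, ← Matrix.mul_assoc]
    rw [e, trace_mul_cycle, ← Matrix.mul_assoc, Matrix.mul_assoc (star U) X U,
      ← Matrix.mul_assoc (star U), trace_mul_diagonal']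
    exact Finset.sum_congr rfl fun i _ => by rw [hY]; ring
  obtain ⟨s, hscard, hle⟩ := exists_topk d (fun i => Y i i) k hk
    (fun i => psd_diag_nonneg hYpsd i)
    (fun i => by
      have := psd_diag_nonneg hY1psd i
      simp only [Matrix.sub_apply, Matrix.one_apply_eq] at this
      linarith)
    (by simpa [Matrix.trace, Matrix.diag] using htrY)
  rw [htrXM]
  refine hle.trans ?_
  have e : ∑ i ∈ s, d i = ∑ i ∈ s, eigs M i := by rw [eigs_eq hM]
  rw [e]
  exact le_sumLargest M s hscard

lemma exists_proj {M : Matrix (Fin n) (Fin n) ℝ} (hM : M.IsHermitian) (s : Finset (Fin n)) :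
    ∃ P : Matrix (Fin n) (Fin n) ℝ, P.PosSemidef ∧ (1 - P).PosSemidef ∧
      P.trace = (s.card : ℝ) ∧ (P * M).trace = ∑ i ∈ s, eigs M i := by
  classical
  obtain ⟨U, hc1, hc2, hU'U, hUU, hspec⟩ := unitary_facts hM
  set e : Fin n → ℝ := fun i => if i ∈ s then 1 else 0 with he
  refine ⟨U * diagonal e * star U, ?_, ?_, ?_, ?_⟩
  · have hd : (diagonal e).PosSemidef := Matrix.PosSemidef.diagonal (by
      intro i; by_cases h : i ∈ s <;> simp [he, h])
    have := hd.mul_mul_conjTranspose_same U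
    simpa only [← Matrix.star_eq_conjTranspose] using this
  · have e1 : 1 - U * diagonal e * star U = U * diagonal (fun i => 1 - e i) * star U := by
      have h2 : diagonal (fun i : Fin n => 1 - e i) = 1 - diagonal e := by
        rw [← diagonal_one, diagonal_sub]
      rw [h2, Matrix.mul_sub, Matrix.sub_mul, Matrix.mul_one, hUU]
    rw [e1]
    have hd : (diagonal (fun i => 1 - e i)).PosSemidef := Matrix.PosSemidef.diagonal (by
      intro i; by_cases h : i ∈ s <;> simp [he, h])
    have := hd.mul_mul_conjTranspose_same U
    simpa only [← Matrix.star_eq_conjTranspose] using this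
  · rw [trace_mul_cycle, hU'U, Matrix.one_mul, Matrix.trace_diagonal, he]
    simp [Finset.sum_ite_mem]
  · have hPM : U * diagonal e * star U * M =
        U * diagonal (fun i => e i * hM.eigenvalues i) * star U := by
      conv_lhs => rw [hspec]
      have h1 : star U * (U * diagonal hM.eigenvalues * star U) = diagonal hM.eigenvalues * star U := by
        rw [Matrix.mul_assoc U, hc2]
      calc U * diagonal e * star U * (U * diagonal hM.eigenvalues * star U)
          = U * (diagonal e * (star U * (U * diagonal hM.eigenvalues * star U))) := by
            simp only [Matrix.mul_assoc]
        _ = U * (diagonal e * (diagonal hM.eigenvalues * star U)) := by rw [h1]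
        _ = U * diagonal (fun i => e i * hM.eigenvalues i) * star U := by
            rw [← Matrix.mul_assoc (diagonal e), Matrix.diagonal_mul_diagonal]
            simp only [Matrix.mul_assoc]
    rw [hPM, trace_mul_cycle, hU'U, Matrix.one_mul, Matrix.trace_diagonal, eigs_eq hM, he]
    simp [ite_mul, Finset.sum_ite_mem]
end H3


section H4

variable {n : ℕ}

lemma psd_sum {ι : Type*} (s : Finset ι) (f : ι → Matrix (Fin n) (Fin n) ℝ)
    (h : ∀ i ∈ s, (f i).PosSemidef) : (∑ i ∈ s, f i).PosSemidef := by
  classical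
  induction s using Finset.induction with
  | empty => simpa using (Matrix.PosSemidef.zero (n := Fin n) (R := ℝ))
  | @insert a s hnot ih =>
    rw [Finset.sum_insert hnot]
    exact (h _ (Finset.mem_insert_self a s)).add (ih fun i hi => h i (Finset.mem_insert_of_mem hi))

lemma trace_mul_wLap {X : Matrix (Fin n) (Fin n) ℝ} (hX : X.IsSymm)
    {w : Fin n → Fin n → ℝ} (hsym : ∀ a b, w a b = w b a) (hdiag : ∀ a, w a a = 0) :
    2 * (X * wLap w).trace = ∑ a, ∑ b, w a b * (X a a + X b b - 2 * X a b) := by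
  have h1 : (X * wLap w).trace = ∑ a, ∑ b, w a b * (X a a - X a b) := by
    simp only [Matrix.trace, Matrix.diag, Matrix.mul_apply, wLap, Matrix.of_apply]
    refine Finset.sum_congr rfl fun a _ => ?_
    have e : ∀ b : Fin n, X a b * (if b = a then ∑ k, w b k else -(w b a)) =
        (-(X a b * w b a)) + (if b = a then X a a * ∑ k, w a k else 0) := by
      intro b
      by_cases hb : b = a
      · subst hb
        simp [hdiag]
      · simp [hb]
    rw [Finset.sum_congr rfl fun b _ => e b, Finset.sum_add_distrib,
      Finset.sum_ite_eq' Finset.univ a (fun _ => X a a * ∑ k, w a k), if_pos (Finset.mem_univ a),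
      Finset.mul_sum, ← Finset.sum_add_distrib]
    refine Finset.sum_congr rfl fun b _ => ?_
    rw [hsym a b]
    ring
  have h2 : (X * wLap w).trace = ∑ a, ∑ b, w a b * (X b b - X a b) := by
    rw [h1, Finset.sum_comm]
    refine Finset.sum_congr rfl fun a _ => Finset.sum_congr rfl fun b _ => ?_
    rw [hsym b a, hX.apply a b]
  calc 2 * (X * wLap w).trace
      = (∑ a, ∑ b, w a b * (X a a - X a b)) + (∑ a, ∑ b, w a b * (X b b - X a b)) := by
        rw [← h1, ← h2]; ring
    _ = ∑ a, ∑ b, w a b * (X a a + X b b - 2 * X a b) := by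
        rw [← Finset.sum_add_distrib]
        refine Finset.sum_congr rfl fun a _ => ?_
        rw [← Finset.sum_add_distrib]
        exact Finset.sum_congr rfl fun b _ => by ring

variable (G : SimpleGraph (Fin n)) [DecidableRel G.Adj]

lemma degree_sum_row (a : Fin n) :
    ∑ b, (if G.Adj a b then (1 : ℝ) else 0) = (G.degree a : ℝ) := by
  rw [Finset.sum_boole, SimpleGraph.degree, SimpleGraph.neighborFinset_eq_filter]

lemma wLap_indicator :
    wLap (fun a b => if G.Adj a b then (1 : ℝ) else 0) = G.lapMatrix ℝ := by
  ext a b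
  simp only [wLap, Matrix.of_apply, SimpleGraph.lapMatrix, SimpleGraph.degMatrix,
    SimpleGraph.adjMatrix, Matrix.sub_apply, Matrix.diagonal_apply, Matrix.of_apply]
  by_cases hab : a = b
  · subst hab
    simp [degree_sum_row G a]
  · simp [hab]

lemma indicator_total :
    ∑ a, ∑ b, (if G.Adj a b then (1 : ℝ) else 0) = 2 * (G.edgeFinset.card : ℝ) := by
  have h : ∀ a, ∑ b, (if G.Adj a b then (1 : ℝ) else 0) = (G.degree a : ℝ) :=
    degree_sum_row G
  rw [Finset.sum_congr rfl fun a _ => h a, ← Nat.cast_sum,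
    SimpleGraph.sum_degrees_eq_twice_card_edges]
  push_cast
  ring
end H4


/-- If the Laplacian `L = Σ λᵢEᵢ` of `G` satisfies `L*(Eᵢ) = γᵢ𝟙` with `γᵢ > 0` for all
nonzero eigenprojectors, then for each `j ∈ [r−1]` the pair `(X_j, x_j)` is feasible for
the dual SDP, `(Y_j, y_j, 𝟙)` is feasible for the primal, they satisfy complementary
slackness, and consequently the uniform weight minimizes `S_{k_j}` over `Δ_E`. -/
theorem dual_certificate_upper_rigidity
    {n : ℕ} (G : SimpleGraph (Fin n)) [DecidableRel G.Adj]
    {r : ℕ} (lam : Fin r → ℝ) (hlam : StrictMono lam)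
    (E : Fin r → Matrix (Fin n) (Fin n) ℝ)
    (hEsymm : ∀ i, (E i).IsSymm)
    (hEorth : ∀ i j, E i * E j = if i = j then E i else 0)
    (hEsum : ∑ i, E i = 1)
    (hdecomp : G.lapMatrix ℝ = ∑ i, lam i • E i)
    (m : Fin r → ℕ) (hm : ∀ i, (E i).trace = (m i : ℝ))
    (γ : Fin r → ℝ) (hγpos : ∀ i : Fin r, 1 ≤ (i : ℕ) → 0 < γ i)
    (hγ : ∀ i : Fin r, 1 ≤ (i : ℕ) → ∀ a b : Fin n, G.Adj a b →
      (E i) a a + (E i) b b - 2 * (E i) a b = γ i)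
    (hlam0 : ∀ i : Fin r, (i : ℕ) = 0 → lam i = 0)
    (j : ℕ) (hj1 : 1 ≤ j) (hjr : j ≤ r - 1)
    (kj : ℕ) (hkj : kj = ∑ i ∈ Finset.univ.filter (fun i : Fin r => r - j ≤ (i : ℕ)), m i)
    (Xj : Matrix (Fin n) (Fin n) ℝ)
    (hXj : Xj = ∑ i ∈ Finset.univ.filter (fun i : Fin r => r - j ≤ (i : ℕ)), E i)
    (xj : ℝ)
    (hxj : xj = ∑ i ∈ Finset.univ.filter (fun i : Fin r => r - j ≤ (i : ℕ)), γ i)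
    (yj : ℝ) (hyj : yj = lam ⟨r - j - 1, by omega⟩)
    (Yj : Matrix (Fin n) (Fin n) ℝ)
    (hYj : Yj = ∑ i ∈ Finset.univ.filter (fun i : Fin r => r - j ≤ (i : ℕ)),
      (lam i - lam ⟨r - j - 1, by omega⟩) • E i) :
    -- dual feasibility of (X_j, x_j)
    ((∀ a b : Fin n, G.Adj a b → xj ≤ Xj a a + Xj b b - 2 * Xj a b) ∧
      Xj.PosSemidef ∧ (1 - Xj).PosSemidef ∧ Xj.trace = (kj : ℝ)) ∧
    -- primal feasibility of (Y_j, y_j, 𝟙)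
    ((yj • (1 : Matrix (Fin n) (Fin n) ℝ) + Yj - G.lapMatrix ℝ).PosSemidef ∧
      Yj.PosSemidef ∧
      InSimplex G (fun a b => if G.Adj a b then (1 : ℝ) else 0)) ∧
    -- complementary slackness
    (Xj * (Yj + yj • (1 : Matrix (Fin n) (Fin n) ℝ) - G.lapMatrix ℝ) = 0 ∧
      Xj * Yj = Yj ∧
      ∑ a, ∑ b, (if G.Adj a b then Xj a a + Xj b b - 2 * Xj a b - xj else 0) = 0) ∧
    -- consequently 𝟙 minimizes S_{k_j} over Δ_E
    (∀ w : Fin n → Fin n → ℝ, InSimplex G w →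
      sumLargest (G.lapMatrix ℝ) kj ≤ sumLargest (wLap w) kj) := by
    classical
  have hr2 : 2 ≤ r := by omega
  have hrj1 : 1 ≤ r - j := by omega
  have hrjlt : r - j - 1 < r := by omega
  set S : Finset (Fin r) := Finset.univ.filter (fun i : Fin r => r - j ≤ (i : ℕ)) with hS
  have hmemS : ∀ i : Fin r, i ∈ S ↔ r - j ≤ (i : ℕ) := by
    intro i; simp [hS]
  -- basic eigen-projector facts
  have hEpsd : ∀ i, (E i).PosSemidef := fun i =>
    psd_of_symm_idem (hEsymm i) (by simpa using hEorth i i)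
  have key : ∀ T : Finset (Fin r),
      (∑ i ∈ T, E i).IsSymm ∧ (∑ i ∈ T, E i) * (∑ i ∈ T, E i) = ∑ i ∈ T, E i := by
    intro T
    constructor
    · rw [Matrix.IsSymm, Matrix.transpose_sum]
      exact Finset.sum_congr rfl fun i _ => hEsymm i
    · rw [Finset.sum_mul]
      refine Finset.sum_congr rfl fun p hp => ?_
      rw [Finset.mul_sum]
      rw [Finset.sum_congr rfl fun q (_ : q ∈ T) => hEorth p q,
        Finset.sum_ite_eq T p (fun _ => E p), if_pos hp]
  have hXsymm : Xj.IsSymm := by rw [hXj]; exact (key _).1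
  have hXpsd : Xj.PosSemidef := by
    rw [hXj]; exact psd_of_symm_idem (key _).1 (key _).2
  have hX1eq : (1 : Matrix (Fin n) (Fin n) ℝ) - Xj
      = ∑ i ∈ Finset.univ.filter (fun i : Fin r => ¬ r - j ≤ (i : ℕ)), E i := by
    have hsplit := Finset.sum_filter_add_sum_filter_not Finset.univ
      (fun i : Fin r => r - j ≤ (i : ℕ)) E
    rw [hEsum] at hsplit
    rw [hXj, ← hsplit]
    abel
  have hX1psd : ((1 : Matrix (Fin n) (Fin n) ℝ) - Xj).PosSemidef := by
    rw [hX1eq]; exact psd_of_symm_idem (key _).1 (key _).2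
  have htrX : Xj.trace = (kj : ℝ) := by
    rw [hXj, Matrix.trace_sum, Finset.sum_congr rfl fun i _ => hm i, hkj]
    push_cast
    rfl
  -- lam comparisons
  have hlam_le : ∀ i : Fin r, ¬ r - j ≤ (i : ℕ) → lam i ≤ yj := by
    intro i hi
    rw [hyj]
    exact hlam.monotone (show i ≤ ⟨r - j - 1, by omega⟩ from by
      rw [Fin.le_def]; simp; omega)
  have hlam_ge : ∀ i : Fin r, r - j ≤ (i : ℕ) → yj ≤ lam i := by
    intro i hi
    rw [hyj]
    exact hlam.monotone (show (⟨r - j - 1, by omega⟩ : Fin r) ≤ i from by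
      rw [Fin.le_def]; simp; omega)
  -- exact complementarity of the dual certificate on edges
  have hLX : ∀ a b : Fin n, G.Adj a b → Xj a a + Xj b b - 2 * Xj a b = xj := by
    intro a b hab
    rw [hXj, hxj]
    simp only [Matrix.sum_apply]
    rw [Finset.mul_sum, ← Finset.sum_add_distrib, ← Finset.sum_sub_distrib]
    refine Finset.sum_congr rfl fun i hi => ?_
    have h1 : 1 ≤ (i : ℕ) := by
      have := (hmemS i).1 hi; omega
    exact hγ i h1 a b hab
  -- rewrite Yj using yj
  have hyY : Yj = ∑ i ∈ S, (lam i - yj) • E i := by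
    rw [hYj, hyj]
  -- the primal slack matrix
  have hMsum : yj • (1 : Matrix (Fin n) (Fin n) ℝ) + Yj - G.lapMatrix ℝ
      = ∑ i : Fin r, (if r - j ≤ (i : ℕ) then (0:ℝ) else yj - lam i) • E i := by
    rw [hdecomp, hyY, ← hEsum, Finset.smul_sum, hS, Finset.sum_filter,
      ← Finset.sum_add_distrib, ← Finset.sum_sub_distrib]
    refine Finset.sum_congr rfl fun i _ => ?_
    by_cases h : r - j ≤ (i : ℕ)
    · simp only [if_pos h]
      module
    · simp only [if_neg h]
      module
  have hMpsd : (yj • (1 : Matrix (Fin n) (Fin n) ℝ) + Yj - G.lapMatrix ℝ).PosSemidef := by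
    rw [hMsum]
    refine psd_sum _ _ fun i _ => ?_
    by_cases h : r - j ≤ (i : ℕ)
    · simp only [if_pos h, zero_smul]
      exact Matrix.PosSemidef.zero
    · simp only [if_neg h]
      exact psd_smul (hEpsd i) (sub_nonneg.2 (hlam_le i h))
  have hYpsd : Yj.PosSemidef := by
    rw [hyY]
    refine psd_sum _ _ fun i hi => ?_
    exact psd_smul (hEpsd i) (sub_nonneg.2 (hlam_ge i ((hmemS i).1 hi)))
  -- the uniform weight
  set w0 : Fin n → Fin n → ℝ := fun a b => if G.Adj a b then (1 : ℝ) else 0 with hw0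
  have hsimpl : InSimplex G w0 := by
    refine ⟨⟨fun a b => ?_, fun a b h => if_neg h, fun a b => ?_⟩, ?_⟩
    · simp only [hw0, G.adj_comm]
    · simp only [hw0]; split <;> norm_num
    · exact indicator_total G
  -- products with Xj
  have hXE : ∀ i : Fin r, Xj * E i = if r - j ≤ (i : ℕ) then E i else 0 := by
    intro i
    rw [hXj, Finset.sum_mul,
      Finset.sum_congr rfl fun p (_ : p ∈ Finset.univ.filter
        (fun i : Fin r => r - j ≤ (i : ℕ))) => hEorth p i,
      Finset.sum_ite_eq' _ i (fun p => E p)]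
    simp [hS]
  have hslack1 : Xj * (Yj + yj • (1 : Matrix (Fin n) (Fin n) ℝ) - G.lapMatrix ℝ) = 0 := by
    have e : Yj + yj • (1 : Matrix (Fin n) (Fin n) ℝ) - G.lapMatrix ℝ
        = yj • (1 : Matrix (Fin n) (Fin n) ℝ) + Yj - G.lapMatrix ℝ := by
      rw [add_comm]
    rw [e, hMsum, Finset.mul_sum]
    refine Finset.sum_eq_zero fun i _ => ?_
    rw [Matrix.mul_smul, hXE i]
    by_cases h : r - j ≤ (i : ℕ) <;> simp [h]
  have hslack2 : Xj * Yj = Yj := by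
    rw [hyY, Finset.mul_sum]
    refine Finset.sum_congr rfl fun i hi => ?_
    rw [Matrix.mul_smul, hXE i, if_pos ((hmemS i).1 hi)]
  have hslack3 : ∑ a, ∑ b,
      (if G.Adj a b then Xj a a + Xj b b - 2 * Xj a b - xj else 0) = 0 := by
    refine Finset.sum_eq_zero fun a _ => Finset.sum_eq_zero fun b _ => ?_
    by_cases hab : G.Adj a b
    · rw [if_pos hab, hLX a b hab, sub_self]
    · rw [if_neg hab]
  -- counting
  have htr1 : ∑ i, (m i : ℝ) = (n : ℝ) := by
    have h1 : (Matrix.trace (1 : Matrix (Fin n) (Fin n) ℝ)) = (n : ℝ) := by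
      simp [Matrix.trace_one]
    rw [← Finset.sum_congr rfl fun i (_ : i ∈ Finset.univ) => hm i,
      ← Matrix.trace_sum, hEsum, h1]
  have hmn : ∑ i, m i = n := by exact_mod_cast (by push_cast at htr1 ⊢; exact htr1 : ((∑ i, m i : ℕ) : ℝ) = (n : ℝ))
  have hkn : kj ≤ n := by
    have h1 : kj ≤ ∑ i, m i := by
      rw [hkj]
      exact Finset.sum_le_sum_of_subset (Finset.filter_subset _ _)
    omega
  -- Laplacian is Hermitian
  have hL_herm : (G.lapMatrix ℝ).IsHermitian := by
    rw [Matrix.IsHermitian, conjTranspose_eq_transpose_of_trivial]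
    exact SimpleGraph.isSymm_lapMatrix ℝ G
  -- trace value of Xj against any simplex weight
  have htrace_val : ∀ w : Fin n → Fin n → ℝ, InSimplex G w →
      (Xj * wLap w).trace = xj * (G.edgeFinset.card : ℝ) := by
    intro w hw
    obtain ⟨⟨hsym, hsupp, hnn⟩, hsum⟩ := hw
    have hdiag : ∀ a, w a a = 0 := fun a => hsupp a a (G.loopless.irrefl a)
    have h2 := trace_mul_wLap hXsymm hsym hdiag
    have hterm : ∑ a, ∑ b, w a b * (Xj a a + Xj b b - 2 * Xj a b)
        = xj * ∑ a, ∑ b, w a b := by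
      rw [Finset.mul_sum]
      refine Finset.sum_congr rfl fun a _ => ?_
      rw [Finset.mul_sum]
      refine Finset.sum_congr rfl fun b _ => ?_
      by_cases hab : G.Adj a b
      · rw [hLX a b hab]; ring
      · rw [hsupp a b hab]; ring
    rw [hterm, hsum] at h2
    linarith
  -- wLap of a symmetric weight is Hermitian
  have hwherm : ∀ w : Fin n → Fin n → ℝ, (∀ a b, w a b = w b a) → (wLap w).IsHermitian := by
    intro w hsym
    rw [Matrix.IsHermitian, conjTranspose_eq_transpose_of_trivial]
    show (wLap w)ᵀ = wLap w
    ext a b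
    simp only [Matrix.transpose_apply, wLap, Matrix.of_apply]
    by_cases hab : a = b
    · subst hab; simp
    · rw [if_neg hab, if_neg (fun h => hab h.symm), hsym b a]
  -- Part A : sumLargest L kj ≤ ∑_{i ∈ S} lam i * m i
  have hA : sumLargest (G.lapMatrix ℝ) kj ≤ ∑ i ∈ S, lam i * (m i : ℝ) := by
    refine sumLargest_le _ hkn fun s hs => ?_
    obtain ⟨P, hP, hP1, htrP, htrPL⟩ := exists_proj hL_herm s
    rw [← htrPL]
    have hPL : (P * G.lapMatrix ℝ).trace = ∑ i, lam i * (P * E i).trace := by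
      rw [hdecomp, Finset.mul_sum, Matrix.trace_sum]
      refine Finset.sum_congr rfl fun i _ => ?_
      rw [Matrix.mul_smul, Matrix.trace_smul, smul_eq_mul]
    rw [hPL]
    refine sum_dot_le lam (fun i => (P * E i).trace) (fun i => (m i : ℝ)) S yj
      (fun i => trace_mul_psd_nonneg hP (hEpsd i))
      (fun i _ => ?_) (fun i hi => hlam_le i (by simpa [hmemS i] using hi))
      (fun i hi => hlam_ge i ((hmemS i).1 hi)) ?_
    · have h1 : 0 ≤ (((1 : Matrix (Fin n) (Fin n) ℝ) - P) * E i).trace :=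
        trace_mul_psd_nonneg hP1 (hEpsd i)
      have h2 : ((1 : Matrix (Fin n) (Fin n) ℝ) - P) * E i = E i - P * E i := by
        rw [Matrix.sub_mul, Matrix.one_mul]
      rw [h2, Matrix.trace_sub, hm i] at h1
      linarith
    · have h3 : ∑ i, (P * E i).trace = (P * ∑ i, E i).trace := by
        rw [Finset.mul_sum, Matrix.trace_sum]
      rw [h3, hEsum, Matrix.mul_one, htrP, hs, hkj]
      push_cast
      rfl
  have hA2 : (Xj * G.lapMatrix ℝ).trace = ∑ i ∈ S, lam i * (m i : ℝ) := by
    rw [hdecomp, Finset.mul_sum, Matrix.trace_sum]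
    have hterm : ∀ i : Fin r, (Xj * (lam i • E i)).trace
        = (if r - j ≤ (i : ℕ) then lam i * (m i : ℝ) else 0) := by
      intro i
      rw [Matrix.mul_smul, Matrix.trace_smul, hXE i]
      by_cases h : r - j ≤ (i : ℕ) <;> simp [h, hm i]
    rw [Finset.sum_congr rfl fun i _ => hterm i, ← Finset.sum_filter]
  have hXL : (Xj * G.lapMatrix ℝ).trace = xj * (G.edgeFinset.card : ℝ) := by
    have h := htrace_val w0 hsimpl
    rwa [wLap_indicator G] at h
  -- combine everything
  refine ⟨⟨fun a b hab => le_of_eq (hLX a b hab).symm, hXpsd, hX1psd, htrX⟩,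
    ⟨hMpsd, hYpsd, hsimpl⟩, ⟨hslack1, hslack2, hslack3⟩, fun w hw => ?_⟩
  have hBB := fan_bound (hwherm w hw.1.1) hXpsd hX1psd hkn htrX
  calc sumLargest (G.lapMatrix ℝ) kj
      ≤ ∑ i ∈ S, lam i * (m i : ℝ) := hA
    _ = (Xj * G.lapMatrix ℝ).trace := hA2.symm
    _ = xj * (G.edgeFinset.card : ℝ) := hXL
    _ = (Xj * wLap w).trace := (htrace_val w hw).symm
    _ ≤ sumLargest (wLap w) kj := hBB
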